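/- For 0 < α < 1, every coefficient of the power series expansion of D(x) = (1+x)^α - (1-x²)^α about 0 is nonnegative, and coefficients of index ≥ 1 are strictly positive. Explicitly, the coefficient of x^(2r+1) is C(α, 2r+1) > 0 and the coefficient of x^(2n) is C(α, 2n) - (-1)^n C(α, n) > 0 for n ≥ 1. -/

import Mathlib

/-- Generalized binomial coefficient C(α, n) = α(α-1)⋯(α-n+1)/n! for real α. -/
noncomputable def genBinom (α : ℝ) (n : ℕ) : ℝ :=
  (∏ i ∈ Finset.range n, (α - i)) / n.factorial
/-- Coefficients of the power series of D(x) = (1+x)^α - (1-x²)^α. -/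
noncomputable def Dcoeff (α : ℝ) (m : ℕ) : ℝ :=
  if m = 0 then 0
  else if m % 2 = 1 then genBinom α m
  else genBinom α m - (-1 : ℝ) ^ (m / 2) * genBinom α (m / 2)


lemma genBinom_zero (α : ℝ) : genBinom α 0 = 1 := by simp [genBinom]

lemma genBinom_succ (α : ℝ) (n : ℕ) :
    genBinom α (n + 1) = (α - n) / (n + 1) * genBinom α n := by
  have h1 : ((n.factorial : ℝ)) ≠ 0 := Nat.cast_ne_zero.2 n.factorial_ne_zero
  have h2 : ((n : ℝ) + 1) ≠ 0 := by positivity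
  rw [genBinom, genBinom, Finset.prod_range_succ, Nat.factorial_succ]
  push_cast
  field_simp

lemma genBinom_sign {α : ℝ} (hα0 : 0 < α) (hα1 : α < 1) :
    ∀ n : ℕ, 0 < (-1 : ℝ) ^ n * genBinom α (n + 1) := by
  intro n
  induction n with
  | zero => simpa [genBinom_succ, genBinom_zero] using hα0
  | succ k ih =>
      have hk : (0:ℝ) ≤ (k:ℝ) := Nat.cast_nonneg k
      have h : genBinom α (k + 2) = (α - ((k:ℝ)+1)) / ((k:ℝ) + 2) * genBinom α (k+1) := by
        have := genBinom_succ α (k + 1); push_cast at this; convert this using 3 <;> push_cast <;> ring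
      have hneg : (α - ((k:ℝ)+1)) / ((k:ℝ) + 2) < 0 :=
        div_neg_of_neg_of_pos (by linarith) (by positivity)
      have key : (-1 : ℝ) ^ (k + 1) * genBinom α (k + 2)
          = (-((α - ((k:ℝ)+1)) / ((k:ℝ) + 2))) * ((-1 : ℝ) ^ k * genBinom α (k+1)) := by
        rw [h]; ring
      rw [key]
      exact mul_pos (by linarith) ih

lemma genBinom_anti {α : ℝ} (hα0 : 0 < α) (hα1 : α < 1) :
    ∀ n : ℕ, (-1 : ℝ) ^ (n + 1) * genBinom α (n + 2)
      < (-1 : ℝ) ^ n * genBinom α (n + 1) := by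
  intro n
  have hk : (0:ℝ) ≤ (n:ℝ) := Nat.cast_nonneg n
  have h : genBinom α (n + 2) = (α - ((n:ℝ)+1)) / ((n:ℝ) + 2) * genBinom α (n+1) := by
    have := genBinom_succ α (n + 1); push_cast at this; convert this using 3 <;> push_cast <;> ring
  have hpos := genBinom_sign hα0 hα1 n
  have hratio : (0:ℝ) < ((n:ℝ)+1 - α) / ((n:ℝ) + 2) := div_pos (by linarith) (by positivity)
  have hratio1 : ((n:ℝ)+1 - α) / ((n:ℝ) + 2) < 1 := by
    rw [div_lt_one (by positivity)]; linarith
  have key : (-1 : ℝ) ^ (n + 1) * genBinom α (n + 2)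
      = (((n:ℝ)+1 - α) / ((n:ℝ) + 2)) * ((-1 : ℝ) ^ n * genBinom α (n + 1)) := by
    rw [h]; ring
  rw [key]
  nlinarith

lemma genBinom_abs_le {α : ℝ} (hα0 : 0 < α) (hα1 : α < 1) : ∀ n : ℕ, |genBinom α n| ≤ 1 := by
  intro n
  induction n with
  | zero => simp [genBinom_zero]
  | succ k ih =>
      have hk : (0:ℝ) ≤ (k:ℝ) := Nat.cast_nonneg k
      rw [genBinom_succ, abs_mul]
      have h1 : |(α - (k:ℝ)) / ((k:ℝ) + 1)| ≤ 1 := by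
        rw [abs_div, div_le_one (by positivity),
          abs_of_pos (by positivity : (0:ℝ) < (k:ℝ)+1), abs_le]
        constructor <;> linarith
      calc |(α - (k:ℝ)) / ((k:ℝ) + 1)| * |genBinom α k| ≤ 1 * 1 :=
            mul_le_mul h1 ih (abs_nonneg _) (by norm_num)
        _ = 1 := by norm_num

lemma summable_genBinom {α x : ℝ} (hα0 : 0 < α) (hα1 : α < 1) (hx : |x| < 1) :
    Summable (fun n : ℕ => genBinom α n * x ^ n) := by
  apply Summable.of_norm_bounded (summable_geometric_of_lt_one (abs_nonneg x) hx)
  intro n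
  rw [Real.norm_eq_abs, abs_mul, abs_pow]
  exact mul_le_of_le_one_left (pow_nonneg (abs_nonneg x) n) (genBinom_abs_le hα0 hα1 n)

lemma summable_aux {r : ℝ} (hr0 : 0 ≤ r) (hr1 : r < 1) :
    Summable (fun n : ℕ => (n : ℝ) * r ^ (n - 1)) := by
  rw [← summable_nat_add_iff 1]
  have h1 : Summable (fun n : ℕ => ((n : ℝ) ^ 1) * r ^ n) :=
    summable_pow_mul_geometric_of_norm_lt_one 1 (by rwa [Real.norm_eq_abs, abs_of_nonneg hr0])
  have h2 : Summable (fun n : ℕ => r ^ n) := summable_geometric_of_lt_one hr0 hr1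
  have := h1.add h2
  apply this.congr
  intro n
  push_cast [Nat.add_sub_cancel]
  ring

lemma summable_genBinom_deriv {α x : ℝ} (hα0 : 0 < α) (hα1 : α < 1) (hx : |x| < 1) :
    Summable (fun n : ℕ => genBinom α n * ((n : ℝ) * x ^ (n - 1))) := by
  apply Summable.of_norm_bounded (summable_aux (abs_nonneg x) hx)
  intro n
  rw [Real.norm_eq_abs, abs_mul, abs_mul, abs_pow, Nat.abs_cast]
  calc |genBinom α n| * ((n : ℝ) * |x| ^ (n - 1)) ≤ 1 * ((n : ℝ) * |x| ^ (n - 1)) := by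
        apply mul_le_mul_of_nonneg_right (genBinom_abs_le hα0 hα1 n)
        positivity
    _ = (n : ℝ) * |x| ^ (n - 1) := one_mul _

lemma hasDerivAt_binomfun {α : ℝ} (hα0 : 0 < α) (hα1 : α < 1) {x : ℝ} (hx : |x| < 1) :
    HasDerivAt (fun y : ℝ => ∑' n : ℕ, genBinom α n * y ^ n)
      (∑' n : ℕ, genBinom α n * ((n : ℝ) * x ^ (n - 1))) x := by
  set ρ : ℝ := (1 + |x|) / 2 with hρ
  have hρ0 : 0 ≤ ρ := by positivity
  have hρ1 : ρ < 1 := by rw [hρ]; linarith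
  have hxρ : |x| < ρ := by rw [hρ]; linarith
  have hmem : ∀ y : ℝ, y ∈ Metric.ball (0:ℝ) ρ ↔ |y| < ρ := by
    intro y; rw [Metric.mem_ball, Real.dist_eq, sub_zero]
  apply hasDerivAt_tsum_of_isPreconnected (u := fun n : ℕ => (n : ℝ) * ρ ^ (n - 1))
      (summable_aux hρ0 hρ1) Metric.isOpen_ball
      ((convex_ball (0:ℝ) ρ).isPreconnected)
      (g' := fun n y => genBinom α n * ((n : ℝ) * y ^ (n - 1)))
  · intro n y _
    exact (hasDerivAt_pow n y).const_mul (genBinom α n)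
  · intro n y hy
    rw [hmem] at hy
    rw [Real.norm_eq_abs, abs_mul, abs_mul, abs_pow, Nat.abs_cast]
    calc |genBinom α n| * ((n : ℝ) * |y| ^ (n - 1))
        ≤ 1 * ((n : ℝ) * ρ ^ (n - 1)) := by
          apply mul_le_mul (genBinom_abs_le hα0 hα1 n)
          · apply mul_le_mul_of_nonneg_left
              (pow_le_pow_left₀ (abs_nonneg y) (le_of_lt (lt_of_lt_of_le hy le_rfl)) _)
              (Nat.cast_nonneg n)
          · positivity
          · norm_num
      _ = (n : ℝ) * ρ ^ (n - 1) := one_mul _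
  · exact (hmem x).2 hxρ
  · exact summable_genBinom hα0 hα1 (lt_trans hxρ hρ1)
  · exact (hmem x).2 hxρ

lemma binom_ode {α : ℝ} (hα0 : 0 < α) (hα1 : α < 1) {y : ℝ} (hy : |y| < 1) :
    (1 + y) * (∑' n : ℕ, genBinom α n * ((n : ℝ) * y ^ (n - 1)))
      = α * ∑' n : ℕ, genBinom α n * y ^ n := by
  set c : ℕ → ℝ := fun n => genBinom α n with hc
  set g' : ℕ → ℝ := fun n => c n * ((n : ℝ) * y ^ (n - 1)) with hg'
  have hS : Summable (fun n : ℕ => c n * y ^ n) := summable_genBinom hα0 hα1 hy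
  have hsum : HasSum (fun n : ℕ => c n * y ^ n) (∑' n : ℕ, c n * y ^ n) := hS.hasSum
  have hS' : Summable g' := summable_genBinom_deriv hα0 hα1 hy
  set T : ℝ := ∑' n : ℕ, g' n with hT'
  have hT : HasSum g' T := hS'.hasSum
  have h1 : HasSum (fun n : ℕ => g' (n + 1)) T := by
    rw [hasSum_nat_add_iff 1]
    simpa [hg', hc] using hT
  have h2 : HasSum (fun n : ℕ => (α - n) * c n * y ^ n) T := by
    have hfun : (fun n : ℕ => g' (n + 1)) = fun n : ℕ => (α - n) * c n * y ^ n := by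
      funext n
      have hne : ((n : ℝ) + 1) ≠ 0 := by positivity
      simp only [hg', hc, Nat.add_sub_cancel, genBinom_succ]
      field_simp
      push_cast
      ring
    rwa [hfun] at h1
  have h3 : HasSum (fun n : ℕ => (n : ℝ) * c n * y ^ n) (y * T) := by
    have h := hT.mul_left y
    have hfun : (fun n : ℕ => y * g' n) = fun n : ℕ => (n : ℝ) * c n * y ^ n := by
      funext n
      cases n with
      | zero => simp [hg']
      | succ k => simp only [hg', Nat.add_sub_cancel]; push_cast [pow_succ]; ring
    rwa [hfun] at h
  have h4 := h2.add h3
  have hfun4 : (fun n : ℕ => (α - n) * c n * y ^ n + (n : ℝ) * c n * y ^ n)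
      = fun n : ℕ => α * (c n * y ^ n) := by
    funext n; ring
  rw [hfun4] at h4
  have h5 := hsum.mul_left α
  have := h4.unique h5
  linarith [this]

lemma hasSum_binomial {α : ℝ} (hα0 : 0 < α) (hα1 : α < 1) {x : ℝ} (hx : |x| < 1) :
    HasSum (fun n : ℕ => genBinom α n * x ^ n) ((1 + x) ^ α) := by
  set F : ℝ → ℝ := fun y => ∑' n : ℕ, genBinom α n * y ^ n with hF
  set h : ℝ → ℝ := fun y => F y * (1 + y) ^ (-α) with hh
  set s : Set ℝ := Set.Ioo (-1 : ℝ) 1 with hs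
  have habs : ∀ y : ℝ, y ∈ s → |y| < 1 := by
    intro y hy; rw [abs_lt]; exact ⟨hy.1, hy.2⟩
  have hderiv : ∀ y ∈ s, HasDerivAt h 0 y := by
    intro y hy
    have hy1 : |y| < 1 := habs y hy
    have h1y : (0:ℝ) < 1 + y := by have := hy.1; simp only [hs, Set.mem_Ioo] at hy; linarith [hy.1]
    set T : ℝ := ∑' n : ℕ, genBinom α n * ((n : ℝ) * y ^ (n - 1)) with hT
    have hF' : HasDerivAt F T y := hasDerivAt_binomfun hα0 hα1 hy1
    have hr : HasDerivAt (fun z : ℝ => (1 + z) ^ (-α)) (-α * (1 + y) ^ (-α - 1)) y := by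
      have hrp := Real.hasDerivAt_rpow_const (x := 1 + y) (p := -α) (Or.inl (ne_of_gt h1y))
      have hid : HasDerivAt (fun z : ℝ => 1 + z) 1 y := (hasDerivAt_id y).const_add 1
      simpa [Function.comp_def] using hrp.comp y hid
    have hprod := hF'.mul hr
    have hode := binom_ode hα0 hα1 hy1
    have hval : T * (1 + y) ^ (-α) + F y * (-α * (1 + y) ^ (-α - 1)) = 0 := by
      have e : (1 + y) ^ (-α) = (1 + y) ^ (-α - 1) * (1 + y) := by
        rw [← Real.rpow_add_one (ne_of_gt h1y) (-α - 1)]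
        norm_num
      rw [e]
      have hthis : (1 + y) * T = α * F y := hode
      linear_combination (1 + y) ^ (-α - 1) * hthis
    rwa [hval] at hprod
  have hdiff : DifferentiableOn ℝ h s := fun y hy =>
    (hderiv y hy).differentiableAt.differentiableWithinAt
  have hfd : ∀ y ∈ s, fderivWithin ℝ h s y = 0 := by
    intro y hy
    rw [fderivWithin_of_isOpen isOpen_Ioo hy, (hderiv y hy).hasFDerivAt.fderiv]
    ext z; simp
  have hxs : x ∈ s := by rw [hs, Set.mem_Ioo]; rw [abs_lt] at hx; exact hx
  have h0s : (0:ℝ) ∈ s := by norm_num [hs]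
  have hconst : h x = h 0 :=
    (convex_Ioo (-1 : ℝ) 1).is_const_of_fderivWithin_eq_zero hdiff hfd hxs h0s
  have hF0 : F 0 = 1 := by
    show (∑' n : ℕ, genBinom α n * (0:ℝ) ^ n) = 1
    rw [tsum_eq_single 0 (by intro n hn; simp [zero_pow hn])]
    simp [genBinom_zero]
  have hh0 : h 0 = 1 := by
    simp [hh, hF0, Real.one_rpow]
  have h1x : (0:ℝ) < 1 + x := by rw [abs_lt] at hx; linarith [hx.1]
  have hFx : F x = (1 + x) ^ α := by
    have hpos : (0:ℝ) < (1 + x) ^ α := Real.rpow_pos_of_pos h1x α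
    have : F x * (1 + x) ^ (-α) = 1 := by
      have := hconst.trans hh0
      simpa [hh] using this
    rw [Real.rpow_neg (le_of_lt h1x)] at this
    field_simp at this
    linarith [this]
  have hsum := (summable_genBinom hα0 hα1 hx).hasSum
  rwa [show (∑' (b : ℕ), genBinom α b * x ^ b) = (1 + x) ^ α from hFx] at hsum


lemma Dcoeff_odd (α : ℝ) (r : ℕ) : Dcoeff α (2 * r + 1) = genBinom α (2 * r + 1) := by
  rw [Dcoeff, if_neg (by omega), if_pos (by omega)]

lemma Dcoeff_even (α : ℝ) {n : ℕ} (hn : 1 ≤ n) :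
    Dcoeff α (2 * n) = genBinom α (2 * n) - (-1 : ℝ) ^ n * genBinom α n := by
  rw [Dcoeff, if_neg (by omega), if_neg (by omega)]
  have h2 : 2 * n / 2 = n := by omega
  rw [h2]

section Pos
variable {α : ℝ} (hα0 : 0 < α) (hα1 : α < 1)

lemma genBinom_odd_pos (hα0 : 0 < α) (hα1 : α < 1) (r : ℕ) :
    0 < genBinom α (2 * r + 1) := by
  have h := genBinom_sign hα0 hα1 (2 * r)
  have he : ((-1 : ℝ)) ^ (2 * r) = 1 := Even.neg_one_pow ⟨r, by ring⟩
  rwa [he, one_mul] at h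

lemma strictAnti_a (hα0 : 0 < α) (hα1 : α < 1) :
    StrictAnti (fun n : ℕ => (-1 : ℝ) ^ n * genBinom α (n + 1)) :=
  strictAnti_nat_of_succ_lt (fun n => by
    have := genBinom_anti hα0 hα1 n
    simpa using this)

lemma genBinom_even_pos (hα0 : 0 < α) (hα1 : α < 1) {n : ℕ} (hn : 1 ≤ n) :
    0 < genBinom α (2 * n) - (-1 : ℝ) ^ n * genBinom α n := by
  obtain ⟨m, rfl⟩ : ∃ m, n = m + 1 := ⟨n - 1, by omega⟩
  set a : ℕ → ℝ := fun k => (-1 : ℝ) ^ k * genBinom α (k + 1) with ha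
  have hlt : a (2 * m + 1) < a m := strictAnti_a hα0 hα1 (by omega)
  -- genBinom α (2*(m+1)) = (-1)^(2m+1) * a (2m+1) = -a (2m+1)
  have e1 : genBinom α (2 * (m + 1)) = -a (2 * m + 1) := by
    have : a (2 * m + 1) = (-1 : ℝ) ^ (2 * m + 1) * genBinom α (2 * m + 2) := rfl
    rw [this, Odd.neg_one_pow ⟨m, by ring⟩]
    have : 2 * (m + 1) = 2 * m + 2 := by ring
    rw [this]; ring
  have e2 : (-1 : ℝ) ^ (m + 1) * genBinom α (m + 1) = -a m := by
    have : a m = (-1 : ℝ) ^ m * genBinom α (m + 1) := rfl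
    rw [this, ← neg_mul]
    congr 1
    rw [pow_succ]
    ring
  rw [e1, e2]
  linarith

lemma Dcoeff_nonneg (hα0 : 0 < α) (hα1 : α < 1) (m : ℕ) : 0 ≤ Dcoeff α m := by
  rcases Nat.eq_zero_or_pos m with hm | hm
  · simp [hm, Dcoeff]
  rcases Nat.even_or_odd m with ⟨k, hk⟩ | ⟨k, hk⟩
  · have hk1 : 1 ≤ k := by omega
    obtain rfl : m = 2 * k := by omega
    rw [Dcoeff_even α hk1]
    exact le_of_lt (genBinom_even_pos hα0 hα1 hk1)
  · obtain rfl : m = 2 * k + 1 := by omega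
    rw [Dcoeff_odd]
    exact le_of_lt (genBinom_odd_pos hα0 hα1 k)

lemma Dcoeff_pos (hα0 : 0 < α) (hα1 : α < 1) {m : ℕ} (hm : 1 ≤ m) : 0 < Dcoeff α m := by
  rcases Nat.even_or_odd m with ⟨k, hk⟩ | ⟨k, hk⟩
  · have hk1 : 1 ≤ k := by omega
    obtain rfl : m = 2 * k := by omega
    rw [Dcoeff_even α hk1]
    exact genBinom_even_pos hα0 hα1 hk1
  · obtain rfl : m = 2 * k + 1 := by omega
    rw [Dcoeff_odd]
    exact genBinom_odd_pos hα0 hα1 k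
end Pos

theorem stmt_11 (α : ℝ) (hα0 : 0 < α) (hα1 : α < 1) :
    (∀ x : ℝ, |x| < 1 →
      HasSum (fun m : ℕ => Dcoeff α m * x ^ m) ((1 + x) ^ α - (1 - x ^ 2) ^ α)) ∧
    (∀ m : ℕ, 0 ≤ Dcoeff α m) ∧
    (∀ m : ℕ, 1 ≤ m → 0 < Dcoeff α m) ∧
    (∀ r : ℕ, Dcoeff α (2 * r + 1) = genBinom α (2 * r + 1) ∧ 0 < genBinom α (2 * r + 1)) ∧
    (∀ n : ℕ, 1 ≤ n →
      Dcoeff α (2 * n) = genBinom α (2 * n) - (-1 : ℝ) ^ n * genBinom α n ∧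
      0 < genBinom α (2 * n) - (-1 : ℝ) ^ n * genBinom α n) := by
  refine ⟨?_, Dcoeff_nonneg hα0 hα1, fun m hm => Dcoeff_pos hα0 hα1 hm,
    fun r => ⟨Dcoeff_odd α r, genBinom_odd_pos hα0 hα1 r⟩,
    fun n hn => ⟨Dcoeff_even α hn, genBinom_even_pos hα0 hα1 hn⟩⟩
  intro x hx
  have hs1 : HasSum (fun n : ℕ => genBinom α n * x ^ n) ((1 + x) ^ α) :=
    hasSum_binomial hα0 hα1 hx
  have hx2 : |(-(x ^ 2) : ℝ)| < 1 := by
    rw [abs_neg, abs_pow]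
    calc |x| ^ 2 ≤ |x| * 1 := by
          rw [pow_two]; exact mul_le_mul_of_nonneg_left (le_of_lt hx) (abs_nonneg x)
      _ = |x| := mul_one _
      _ < 1 := hx
  have hs2' : HasSum (fun n : ℕ => genBinom α n * (-(x ^ 2)) ^ n) ((1 + -(x ^ 2)) ^ α) :=
    hasSum_binomial hα0 hα1 hx2
  have hs2 : HasSum (fun n : ℕ => genBinom α n * (-(x ^ 2)) ^ n) ((1 - x ^ 2) ^ α) := by
    rwa [show (1 : ℝ) + -(x ^ 2) = 1 - x ^ 2 by ring] at hs2'
  set g : ℕ → ℝ := fun m =>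
    if m % 2 = 0 then (-1 : ℝ) ^ (m / 2) * genBinom α (m / 2) * x ^ m else 0 with hg
  have hinj : Function.Injective (fun n : ℕ => 2 * n) := fun a b h => by simp only at h; omega
  have hcomp : (g ∘ fun n : ℕ => 2 * n) = fun n : ℕ => genBinom α n * (-(x ^ 2)) ^ n := by
    funext n
    simp only [Function.comp_apply, hg, if_pos (by omega : 2 * n % 2 = 0),
      Nat.mul_div_cancel_left n (by norm_num : 0 < 2)]
    rw [show (-(x ^ 2)) ^ n = (-1 : ℝ) ^ n * x ^ (2 * n) by
      rw [neg_pow, pow_mul]]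
    ring
  have hg0 : ∀ m ∉ Set.range (fun n : ℕ => 2 * n), g m = 0 := by
    intro m hm
    rw [hg]
    simp only
    rw [if_neg]
    intro hmod
    exact hm ⟨m / 2, by show 2 * (m / 2) = m; omega⟩
  have hsg : HasSum g ((1 - x ^ 2) ^ α) := by
    rw [← Function.Injective.hasSum_iff hinj hg0]
    rwa [hcomp]
  have hfinal := hs1.sub hsg
  have hfun : (fun m : ℕ => Dcoeff α m * x ^ m)
      = fun m : ℕ => genBinom α m * x ^ m - g m := by
    funext m
    rcases Nat.eq_zero_or_pos m with hm | hm
    · subst hm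
      simp [Dcoeff, hg, genBinom_zero]
    rcases Nat.even_or_odd m with ⟨k, hk⟩ | ⟨k, hk⟩
    · have hk1 : 1 ≤ k := by omega
      obtain rfl : m = 2 * k := by omega
      rw [Dcoeff_even α hk1, hg]
      simp only [if_pos (by omega : 2 * k % 2 = 0),
        Nat.mul_div_cancel_left k (by norm_num : 0 < 2)]
      ring
    · obtain rfl : m = 2 * k + 1 := by omega
      have hmod : ¬ ((2 * k + 1) % 2 = 0) := by omega
      rw [Dcoeff_odd α k, hg]
      simp only [if_neg hmod]
      ring
  rw [hfun]
  exact hfinal
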